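/- A connected bicolored ribbon graph with d edges, encoded by permutations σ, τ ∈ S_d (acting transitively), corresponds to a hypermap of genus g on d darts where g is determined by 2 - 2g = c(σ) + c(τ) + c((στ)⁻¹) - d, with c(·) denoting the number of cycles; moreover 2 - 2g ≤ c(σ) + c(τ) + c(στ) holds with g ≥ 0, i.e., c(σ) + c(τ) + c(στ) ≤ d + 2 for any σ, τ generating a transitive subgroup of S_d. -/

import Mathlib

/-- The number of cycles of a permutation of `{1,…,d}`, counting fixed points
as cycles of length 1:  `d` minus the number of points moved, plus the number
of nontrivial cycles. -/
def numCycles {d : ℕ} (π : Equiv.Perm (Fin d)) : ℕ :=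
  (d - π.cycleType.sum) + π.cycleType.card

namespace HypermapAux

open Equiv Equiv.Perm

variable {d : ℕ}

/-- Same-cycle setoid of a permutation. -/
def scS (π : Perm (Fin d)) : Setoid (Fin d) :=
  ⟨π.SameCycle, ⟨fun x => SameCycle.refl π x, fun h => h.symm, fun h h' => h.trans h'⟩⟩

/-- Orbit setoid of a subgroup of permutations. -/
def orbS (G : Subgroup (Perm (Fin d))) : Setoid (Fin d) :=
  ⟨fun x y => ∃ g ∈ G, g x = y,
   ⟨fun x => ⟨1, G.one_mem, rfl⟩,
    fun {x y} ⟨g, hg, h⟩ => ⟨g⁻¹, G.inv_mem hg, by rw [← h]; exact g.symm_apply_apply x⟩,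
    fun {x y z} ⟨g, hg, h⟩ ⟨k, hk, h'⟩ =>
      ⟨k * g, G.mul_mem hk hg, by rw [Perm.mul_apply, h, h']⟩⟩⟩

/-- Number of orbits of a subgroup of permutations. -/
noncomputable def numOrb (G : Subgroup (Perm (Fin d))) : ℕ :=
  Nat.card (Quotient (orbS G))

/-- Chain a one-step invariance over a whole cycle. -/
lemma chain {r : Fin d → Fin d → Prop} (hr : Equivalence r) (ρ : Perm (Fin d))
    (hstep : ∀ x, r x (ρ x)) {x y : Fin d} (h : ρ.SameCycle x y) : r x y := by
  have hnat : ∀ (n : ℕ) (z : Fin d), r z ((ρ ^ n) z) := by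
    intro n
    induction n with
    | zero => intro z; simpa using hr.refl z
    | succ n ih =>
        intro z
        have h1 : r z (ρ z) := hstep z
        have h2 : r (ρ z) ((ρ ^ n) (ρ z)) := ih (ρ z)
        have heq : (ρ ^ (n + 1)) z = (ρ ^ n) (ρ z) := by
          rw [pow_succ, Perm.mul_apply]
        rw [heq]
        exact hr.trans h1 h2
  obtain ⟨i, hi⟩ := h
  cases i with
  | ofNat n =>
      have : (ρ ^ n) x = y := by rwa [Int.ofNat_eq_coe, zpow_natCast] at hi
      rw [← this]; exact hnat n x
  | negSucc n =>
      have hx : x = (ρ ^ (n + 1)) y := by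
        rw [← hi, zpow_negSucc]
        simp
      exact hr.symm (by rw [hx]; exact hnat (n + 1) y)

/-- Closure induction for an equivalence-relation invariance. -/
lemma closure_rel {r : Fin d → Fin d → Prop} (hr : Equivalence r)
    {S : Set (Perm (Fin d))} (hstep : ∀ s ∈ S, ∀ x, r x (s x)) :
    ∀ g ∈ Subgroup.closure S, ∀ x, r x (g x) := by
  intro g hg
  induction hg using Subgroup.closure_induction with
  | mem s hs => exact hstep s hs
  | one => intro x; simpa using hr.refl x
  | mul a b ha hb pa pb =>
      intro x
      have : (a * b) x = a (b x) := rfl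
      rw [this]
      exact hr.trans (pb x) (pa (b x))
  | inv a ha pa =>
      intro x
      have := pa (a⁻¹ x)
      rw [show a (a⁻¹ x) = x from a.apply_symm_apply x] at this
      exact hr.symm this

lemma card_quot_le_of_le {s₁ s₂ : Setoid (Fin d)} (h : ∀ x y, s₁.r x y → s₂.r x y) :
    Nat.card (Quotient s₂) ≤ Nat.card (Quotient s₁) := by
  apply Nat.card_le_card_of_surjective
    (Quotient.lift (fun x => Quotient.mk s₂ x) (fun a b hab => Quotient.sound (h a b hab)))
  intro q
  obtain ⟨x, rfl⟩ := Quotient.exists_rep q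
  exact ⟨Quotient.mk s₁ x, rfl⟩

/-- The auxiliary "merge two classes" relation is an equivalence. -/
lemma rrEquiv (s : Setoid (Fin d)) (a b : Fin d) :
    Equivalence (fun x y => s.r x y ∨ ((s.r x a ∨ s.r x b) ∧ (s.r y a ∨ s.r y b))) := by
  constructor
  · intro x; exact Or.inl (s.iseqv.refl x)
  · rintro x y (h | ⟨h1, h2⟩)
    · exact Or.inl (s.iseqv.symm h)
    · exact Or.inr ⟨h2, h1⟩
  · rintro x y z (h | ⟨h1, h2⟩) (h' | ⟨h1', h2'⟩)
    · exact Or.inl (s.iseqv.trans h h')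
    · refine Or.inr ⟨?_, h2'⟩
      rcases h1' with h1' | h1'
      · exact Or.inl (s.iseqv.trans h h1')
      · exact Or.inr (s.iseqv.trans h h1')
    · refine Or.inr ⟨h1, ?_⟩
      rcases h2 with h2 | h2
      · exact Or.inl (s.iseqv.trans (s.iseqv.symm h') h2)
      · exact Or.inr (s.iseqv.trans (s.iseqv.symm h') h2)
    · exact Or.inr ⟨h1, h2'⟩

/-- If `s₂`-classes are `s₁`-classes except possibly merging the classes of `a` and `b`,
then the number of `s₁`-classes is at most one more than the number of `s₂`-classes. -/
lemma card_quot_le_succ {s₁ s₂ : Setoid (Fin d)} {a b : Fin d}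
    (hle : ∀ x y, s₁.r x y → s₂.r x y)
    (hsp : ∀ x y, s₂.r x y → s₁.r x y ∨ ((s₁.r x a ∨ s₁.r x b) ∧ (s₁.r y a ∨ s₁.r y b))) :
    Nat.card (Quotient s₁) ≤ Nat.card (Quotient s₂) + 1 := by
  classical
  have key : Nat.card (Quotient s₁) ≤ Nat.card (Option (Quotient s₂)) := by
    apply Nat.card_le_card_of_injective
      (fun q => if q = Quotient.mk s₁ a then none else
        some (Quotient.lift (fun x => Quotient.mk s₂ x)
          (fun u v huv => Quotient.sound (hle u v huv)) q))
    intro q₁ q₂ hq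
    dsimp only at hq
    by_cases h1 : q₁ = Quotient.mk s₁ a
    · by_cases h2 : q₂ = Quotient.mk s₁ a
      · rw [h1, h2]
      · rw [if_pos h1, if_neg h2] at hq; exact absurd hq (by simp)
    · by_cases h2 : q₂ = Quotient.mk s₁ a
      · rw [if_neg h1, if_pos h2] at hq; exact absurd hq (by simp)
      · rw [if_neg h1, if_neg h2] at hq
        obtain ⟨x, rfl⟩ := Quotient.exists_rep q₁
        obtain ⟨y, rfl⟩ := Quotient.exists_rep q₂
        have hq' := Option.some.inj hq
        have hxy : s₂.r x y := Quotient.exact hq'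
        rcases hsp x y hxy with h | ⟨hx, hy⟩
        · exact Quotient.sound h
        · have hx' : s₁.r x b := by
            rcases hx with hx | hx
            · exact absurd (Quotient.sound hx) h1
            · exact hx
          have hy' : s₁.r y b := by
            rcases hy with hy | hy
            · exact absurd (Quotient.sound hy) h2
            · exact hy
          exact Quotient.sound (s₁.iseqv.trans hx' (s₁.iseqv.symm hy'))
  simpa [Finite.card_option] using key

theorem numCycles_eq (π : Perm (Fin d)) :
    numCycles π = Nat.card (Quotient (scS π)) := by
  classical
  have hmem : ∀ x : Fin d, π x ≠ x → π.cycleOf x ∈ π.cycleFactorsFinset := fun x hx =>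
    cycleOf_mem_cycleFactorsFinset_iff.mpr (mem_support.mpr hx)
  set f : Fin d → (Function.fixedPoints ⇑π) ⊕ {c // c ∈ π.cycleFactorsFinset} := fun x =>
    if h : π x = x then Sum.inl ⟨x, h⟩ else Sum.inr ⟨π.cycleOf x, hmem x h⟩ with hf
  have hwd : ∀ x y : Fin d, π.SameCycle x y → f x = f y := by
    intro x y hxy
    by_cases hx : π x = x
    · have hyx : y = x := by
        obtain ⟨i, hi⟩ := hxy
        rw [← hi, zpow_apply_eq_self_of_apply_eq_self hx]
      subst hyx; rfl
    · have hy : π y ≠ y := by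
        intro hy
        apply hx
        obtain ⟨i, hi⟩ := hxy.symm
        have hxy' : x = y := by rw [← hi, zpow_apply_eq_self_of_apply_eq_self hy]
        rw [hxy']; exact hy
      simp only [hf, dif_neg hx, dif_neg hy]
      exact congrArg _ (Subtype.ext hxy.cycleOf_eq)
  set F : Quotient (scS π) → (Function.fixedPoints ⇑π) ⊕ {c // c ∈ π.cycleFactorsFinset} :=
    Quotient.lift f (fun x y h => hwd x y h) with hF
  have hinj : Function.Injective F := by
    intro q₁ q₂ hq
    obtain ⟨x, rfl⟩ := Quotient.exists_rep q₁
    obtain ⟨y, rfl⟩ := Quotient.exists_rep q₂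
    have hfxy : f x = f y := hq
    apply Quotient.sound
    show π.SameCycle x y
    rw [hf] at hfxy
    dsimp only at hfxy
    by_cases hx : π x = x
    · by_cases hy : π y = y
      · rw [dif_pos hx, dif_pos hy] at hfxy
        have hxy : x = y := congrArg Subtype.val (Sum.inl.inj hfxy)
        exact hxy ▸ SameCycle.refl π x
      · rw [dif_pos hx, dif_neg hy] at hfxy
        exact absurd hfxy (by simp)
    · by_cases hy : π y = y
      · rw [dif_neg hx, dif_pos hy] at hfxy
        exact absurd hfxy (by simp)
      · rw [dif_neg hx, dif_neg hy] at hfxy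
        have hceq : π.cycleOf x = π.cycleOf y := congrArg Subtype.val (Sum.inr.inj hfxy)
        have hy' : y ∈ (π.cycleOf y).support :=
          mem_support_cycleOf_iff.mpr ⟨SameCycle.refl π y, mem_support.mpr hy⟩
        rw [← hceq] at hy'
        exact (mem_support_cycleOf_iff.mp hy').1
  have hsurj : Function.Surjective F := by
    rintro (⟨x, hx⟩ | ⟨c, hc⟩)
    · refine ⟨Quotient.mk _ x, ?_⟩
      show f x = _
      rw [hf]
      exact dif_pos hx
    · obtain ⟨x, hx, -⟩ := (mem_cycleFactorsFinset_iff.mp hc).1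
      have hxs : x ∈ c.support := mem_support.mpr hx
      have hπx : π x ≠ x := by
        have h2 := (mem_cycleFactorsFinset_iff.mp hc).2 x hxs
        rw [h2] at hx; exact hx
      have hcx : c = π.cycleOf x := cycle_is_cycleOf hxs hc
      refine ⟨Quotient.mk _ x, ?_⟩
      show f x = _
      rw [hf]
      dsimp only
      rw [dif_neg hπx]
      exact congrArg _ (Subtype.ext hcx.symm)
  have hcard := Nat.card_eq_of_bijective F ⟨hinj, hsurj⟩
  rw [hcard, Nat.card_sum]
  have h1 : Nat.card (Function.fixedPoints ⇑π) = d - π.cycleType.sum := by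
    rw [Nat.card_eq_fintype_card, card_fixedPoints, Fintype.card_fin]
  have h2 : Nat.card {c // c ∈ π.cycleFactorsFinset} = π.cycleType.card := by
    rw [Nat.card_eq_fintype_card]
    rw [cycleType_def, Multiset.card_map]
    exact Fintype.card_coe _
  rw [h1, h2, numCycles]

/-- If `a`, `b` lie in distinct cycles of `ρ`, then they lie in the same cycle of
`swap a b * ρ`. -/
lemma swap_mul_sameCycle {ρ : Perm (Fin d)} {a b : Fin d} (hab : a ≠ b)
    (h : ¬ρ.SameCycle a b) : (Equiv.swap a b * ρ).SameCycle a b := by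
  set g := Equiv.swap a b * ρ with hg
  have hex : ∃ n, 0 < n ∧ (ρ ^ n) a = a :=
    ⟨orderOf ρ, orderOf_pos ρ, by rw [pow_orderOf_eq_one]; rfl⟩
  set n := Nat.find hex with hn
  obtain ⟨hn0, hna⟩ := Nat.find_spec hex
  have hmin : ∀ m, m < n → ¬(0 < m ∧ (ρ ^ m) a = a) := fun m hm => Nat.find_min hex hm
  have key : ∀ j, j < n → (g ^ j) a = (ρ ^ j) a := by
    intro j
    induction j with
    | zero => intro _; simp
    | succ j ih =>
      intro hj
      have hj' : j < n := Nat.lt_of_succ_lt hj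
      have hne_a : (ρ ^ (j + 1)) a ≠ a := fun hcon => hmin (j + 1) hj ⟨Nat.succ_pos j, hcon⟩
      have hne_b : (ρ ^ (j + 1)) a ≠ b := fun hcon =>
        h ⟨((j : ℤ) + 1), by rw [← zpow_natCast] at hcon; exact_mod_cast hcon⟩
      have hρs : ρ ((ρ ^ j) a) = (ρ ^ (j + 1)) a := by rw [pow_succ', Perm.mul_apply]
      have hgs : (g ^ (j + 1)) a = g ((g ^ j) a) := by rw [pow_succ', Perm.mul_apply]
      rw [hgs, ih hj', hg, Perm.mul_apply, hρs]
      exact Equiv.swap_apply_of_ne_of_ne hne_a hne_b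
  have hgn : (g ^ n) a = b := by
    obtain ⟨m, hm⟩ : ∃ m, n = m + 1 := ⟨n - 1, (Nat.succ_pred_eq_of_pos hn0).symm⟩
    have h1 : (g ^ (m + 1)) a = g ((g ^ m) a) := by rw [pow_succ', Perm.mul_apply]
    have h2 : ρ ((ρ ^ m) a) = (ρ ^ (m + 1)) a := by rw [pow_succ', Perm.mul_apply]
    rw [hm, h1, key m (by omega), hg, Perm.mul_apply, h2, ← hm, hna]
    exact Equiv.swap_apply_left a b
  exact ⟨(n : ℤ), by rw [zpow_natCast]; exact hgn⟩

lemma step_sameCycle_of_not {ρ : Perm (Fin d)} {a b : Fin d} (hab : a ≠ b)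
    (h : ¬ρ.SameCycle a b) (x : Fin d) : (Equiv.swap a b * ρ).SameCycle x (ρ x) := by
  set g := Equiv.swap a b * ρ with hg
  have hM := swap_mul_sameCycle hab h
  have hgx : g x = Equiv.swap a b (ρ x) := rfl
  by_cases h1 : ρ x = a
  · have hxb : g x = b := by rw [hgx, h1, Equiv.swap_apply_left]
    have h2 : g.SameCycle x b := ⟨1, by simpa using hxb⟩
    rw [h1]
    exact h2.trans hM.symm
  · by_cases h2 : ρ x = b
    · have hxa : g x = a := by rw [hgx, h2, Equiv.swap_apply_right]
      have h3 : g.SameCycle x a := ⟨1, by simpa using hxa⟩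
      rw [h2]
      exact h3.trans hM
    · have hxx : g x = ρ x := by rw [hgx, Equiv.swap_apply_of_ne_of_ne h1 h2]
      exact ⟨1, by simpa using hxx⟩

/-- Merging two distinct cycles strictly decreases the cycle count. -/
theorem numCycles_swap_mul_of_not {ρ : Perm (Fin d)} {a b : Fin d} (hab : a ≠ b)
    (h : ¬ρ.SameCycle a b) : numCycles (Equiv.swap a b * ρ) + 1 ≤ numCycles ρ := by
  classical
  set g := Equiv.swap a b * ρ with hg
  have hM := swap_mul_sameCycle hab h
  have hR : ∀ x y, ρ.SameCycle x y → g.SameCycle x y := fun x y hxy =>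
    chain (scS g).iseqv ρ (step_sameCycle_of_not hab h) hxy
  set F : Fin d → Quotient (scS ρ) := fun x =>
    if ρ.SameCycle x b then Quotient.mk (scS ρ) a else Quotient.mk (scS ρ) x with hF
  have hstep : ∀ x, F x = F (g x) := by
    intro x
    have hgx : g x = Equiv.swap a b (ρ x) := rfl
    by_cases h1 : ρ x = a
    · have hxb : g x = b := by rw [hgx, h1, Equiv.swap_apply_left]
      have hcx : ¬ρ.SameCycle x b := by
        intro hc
        apply h
        refine SameCycle.trans ?_ hc
        exact SameCycle.symm ⟨1, by simpa using h1⟩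
      rw [hxb, hF]
      dsimp only
      rw [if_neg hcx, if_pos (SameCycle.refl ρ b)]
      exact Quotient.sound (⟨1, by simpa using h1⟩ : ρ.SameCycle x a)
    · by_cases h2 : ρ x = b
      · have hxa : g x = a := by rw [hgx, h2, Equiv.swap_apply_right]
        have hcx : ρ.SameCycle x b := ⟨1, by simpa using h2⟩
        rw [hxa, hF]
        dsimp only
        rw [if_pos hcx, if_neg h]
      · have hxx : g x = ρ x := by rw [hgx, Equiv.swap_apply_of_ne_of_ne h1 h2]
        have hstep1 : ρ.SameCycle x (ρ x) := ⟨1, by simp⟩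
        rw [hxx, hF]
        dsimp only
        by_cases hc : ρ.SameCycle x b
        · rw [if_pos hc, if_pos (hstep1.symm.trans hc)]
        · rw [if_neg hc, if_neg (fun hc' => hc (hstep1.trans hc'))]
          exact Quotient.sound hstep1
  have hFinv : ∀ x y, g.SameCycle x y → F x = F y :=
    fun x y hxy => chain (r := fun u v => F u = F v) ⟨fun _ => rfl, Eq.symm, Eq.trans⟩ g hstep hxy
  set Φ : Option (Quotient (scS g)) → Quotient (scS ρ) := fun o =>
    o.elim (Quotient.mk (scS ρ) b) (Quotient.lift F (fun x y hxy => hFinv x y hxy)) with hΦ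
  have hFnotb : ∀ x, F x ≠ Quotient.mk (scS ρ) b := by
    intro x hc
    rw [hF] at hc
    dsimp only at hc
    by_cases hcx : ρ.SameCycle x b
    · rw [if_pos hcx] at hc
      exact h (Quotient.exact hc)
    · rw [if_neg hcx] at hc
      exact hcx (Quotient.exact hc)
  have hΦinj : Function.Injective Φ := by
    rintro (_ | q₁) (_ | q₂) hq
    · rfl
    · exfalso
      obtain ⟨y, rfl⟩ := Quotient.exists_rep q₂
      exact hFnotb y (by simpa [hΦ] using hq.symm)
    · exfalso
      obtain ⟨x, rfl⟩ := Quotient.exists_rep q₁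
      exact hFnotb x (by simpa [hΦ] using hq)
    · obtain ⟨x, rfl⟩ := Quotient.exists_rep q₁
      obtain ⟨y, rfl⟩ := Quotient.exists_rep q₂
      have hFxy : F x = F y := by simpa [hΦ] using hq
      congr 1
      apply Quotient.sound
      show g.SameCycle x y
      rw [hF] at hFxy
      dsimp only at hFxy
      by_cases hx : ρ.SameCycle x b
      · by_cases hy : ρ.SameCycle y b
        · exact (hR x b hx).trans (hR y b hy).symm
        · rw [if_pos hx, if_neg hy] at hFxy
          have hay : ρ.SameCycle a y := Quotient.exact hFxy
          exact ((hR x b hx).trans hM.symm).trans (hR a y hay)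
      · by_cases hy : ρ.SameCycle y b
        · rw [if_neg hx, if_pos hy] at hFxy
          have hxa : ρ.SameCycle x a := Quotient.exact hFxy
          exact ((hR x a hxa).trans hM).trans (hR y b hy).symm
        · rw [if_neg hx, if_neg hy] at hFxy
          exact hR x y (Quotient.exact hFxy)
  have hle := Nat.card_le_card_of_injective Φ hΦinj
  rw [Finite.card_option] at hle
  rw [numCycles_eq, numCycles_eq]
  exact hle

/-- Splitting a cycle increases the cycle count by at most one. -/
theorem numCycles_swap_mul_of_sameCycle {ρ : Perm (Fin d)} {a b : Fin d}
    (h : ρ.SameCycle a b) :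
    numCycles (Equiv.swap a b * ρ) ≤ numCycles ρ + 1 := by
  classical
  set g := Equiv.swap a b * ρ with hg
  have hstep : ∀ x, ρ.SameCycle x (g x) := by
    intro x
    have hgx : g x = Equiv.swap a b (ρ x) := rfl
    have hstep1 : ρ.SameCycle x (ρ x) := ⟨1, by simp⟩
    by_cases h1 : ρ x = a
    · rw [hgx, h1, Equiv.swap_apply_left]
      exact (hstep1.trans (h1 ▸ SameCycle.refl ρ (ρ x))).trans (h1 ▸ h)
    · by_cases h2 : ρ x = b
      · rw [hgx, h2, Equiv.swap_apply_right]
        exact hstep1.trans (h2 ▸ h.symm)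
      · rw [hgx, Equiv.swap_apply_of_ne_of_ne h1 h2]
        exact hstep1
  have hle : ∀ x y, (scS g).r x y → (scS ρ).r x y := fun x y hxy =>
    chain (scS ρ).iseqv g hstep hxy
  have hrr := rrEquiv (scS g) a b
  have hstep2 : ∀ x,
      (fun x y => (scS g).r x y ∨
        (((scS g).r x a ∨ (scS g).r x b) ∧ ((scS g).r y a ∨ (scS g).r y b))) x (ρ x) := by
    intro x
    have hgx : g x = Equiv.swap a b (ρ x) := rfl
    have hxgx : g.SameCycle x (g x) := ⟨1, by simp⟩
    by_cases h1 : ρ x = a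
    · refine Or.inr ⟨Or.inr ?_, Or.inl (h1 ▸ SameCycle.refl g (ρ x))⟩
      have : g x = b := by rw [hgx, h1, Equiv.swap_apply_left]
      exact this ▸ hxgx
    · by_cases h2 : ρ x = b
      · refine Or.inr ⟨Or.inl ?_, Or.inr (h2 ▸ SameCycle.refl g (ρ x))⟩
        have : g x = a := by rw [hgx, h2, Equiv.swap_apply_right]
        exact this ▸ hxgx
      · refine Or.inl ?_
        have : g x = ρ x := by rw [hgx, Equiv.swap_apply_of_ne_of_ne h1 h2]
        exact this ▸ hxgx
  have hsp : ∀ x y, (scS ρ).r x y →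
      (scS g).r x y ∨ (((scS g).r x a ∨ (scS g).r x b) ∧ ((scS g).r y a ∨ (scS g).r y b)) :=
    fun x y hxy => chain hrr ρ hstep2 hxy
  have := card_quot_le_succ hle hsp
  rw [numCycles_eq, numCycles_eq]
  exact this

/-- The key inequality: the genus of the hypermap generated by `σ`, `τ` is nonnegative,
in the form valid for a general (not necessarily transitive) pair. -/
theorem key : ∀ (n : ℕ) (σ τ : Perm (Fin d)), σ.support.card = n →
    numCycles σ + numCycles τ + numCycles (σ * τ) ≤
      d + 2 * numOrb (Subgroup.closure ({σ, τ} : Set (Perm (Fin d)))) := by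
  intro n
  induction n using Nat.strong_induction_on with
  | _ n ih =>
    intro σ τ hn
    by_cases hσ1 : σ = 1
    · subst hσ1
      have hone : numCycles (1 : Perm (Fin d)) = d := by
        simp [numCycles, cycleType_one]
      have hbase : numCycles τ ≤
          numOrb (Subgroup.closure ({(1 : Perm (Fin d)), τ} : Set (Perm (Fin d)))) := by
        have hstep : ∀ s ∈ ({(1 : Perm (Fin d)), τ} : Set (Perm (Fin d))), ∀ x,
            τ.SameCycle x (s x) := by
          rintro s hs x
          simp only [Set.mem_insert_iff, Set.mem_singleton_iff] at hs
          rcases hs with rfl | rfl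
          · simpa using SameCycle.refl τ x
          · exact ⟨1, by simp⟩
        have hle : ∀ x y,
            (orbS (Subgroup.closure ({(1 : Perm (Fin d)), τ} : Set (Perm (Fin d))))).r x y →
            (scS τ).r x y := by
          rintro x y ⟨g, hg, rfl⟩
          exact closure_rel (scS τ).iseqv hstep g hg x
        have hc := card_quot_le_of_le hle
        rw [numCycles_eq]
        exact hc
      rw [hone, one_mul]
      omega
    · have hne : σ.support.Nonempty := by
        rw [Finset.nonempty_iff_ne_empty]
        intro hc
        exact hσ1 (by rwa [support_eq_empty_iff] at hc)
      obtain ⟨a, ha⟩ := hne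
      have haa : σ a ≠ a := mem_support.mp ha
      set b := σ a with hb
      have hab : a ≠ b := fun hc => haa hc.symm
      set σ' := Equiv.swap a b * σ with hσ'
      have hσσ' : σ = Equiv.swap a b * σ' := by
        rw [hσ', ← mul_assoc, Equiv.swap_mul_self, one_mul]
      have hcard : σ'.support.card < n := by
        rw [← hn, hσ', hb]
        exact card_support_swap_mul haa
      have hfix : σ' a = a := by
        rw [hσ', Perm.mul_apply, ← hb, Equiv.swap_apply_right]
      have hnsc : ¬σ'.SameCycle a b := by
        rintro ⟨i, hi⟩
        rw [zpow_apply_eq_self_of_apply_eq_self hfix i] at hi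
        exact hab hi
      have hY := numCycles_swap_mul_of_not hab hnsc
      rw [← hσσ'] at hY
      set ρ := σ' * τ with hρ
      have hστ : σ * τ = Equiv.swap a b * ρ := by rw [hσσ', hρ, mul_assoc]
      have IH := ih _ hcard σ' τ rfl
      rw [← hρ] at IH
      set G := Subgroup.closure ({σ, τ} : Set (Perm (Fin d))) with hG
      set G' := Subgroup.closure ({σ', τ} : Set (Perm (Fin d))) with hG'
      have hσG : σ ∈ G := Subgroup.subset_closure (Set.mem_insert _ _)
      have hτG : τ ∈ G := Subgroup.subset_closure (Set.mem_insert_of_mem _ rfl)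
      have hσ'G' : σ' ∈ G' := Subgroup.subset_closure (Set.mem_insert _ _)
      have hτG' : τ ∈ G' := Subgroup.subset_closure (Set.mem_insert_of_mem _ rfl)
      have hρG' : ρ ∈ G' := G'.mul_mem hσ'G' hτG'
      have hab' : σ a = b := hb.symm
      have hσ'x : ∀ x, σ' x = Equiv.swap a b (σ x) := by
        intro x
        rw [hσ']
        rfl
      have hσx : ∀ x, σ x = Equiv.swap a b (σ' x) := by
        intro x
        conv_lhs => rw [hσσ']
        rfl
      have hstepσ' : ∀ x, (orbS G).r x (σ' x) := by
        intro x
        by_cases h1 : σ x = a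
        · rw [hσ'x, h1, Equiv.swap_apply_left]
          exact (orbS G).iseqv.trans ⟨σ, hσG, h1⟩ ⟨σ, hσG, hab'⟩
        · by_cases h2 : σ x = b
          · have hxa : x = a := σ.injective (h2.trans hab'.symm)
            rw [hσ'x, h2, Equiv.swap_apply_right]
            exact hxa ▸ (orbS G).iseqv.refl x
          · rw [hσ'x, Equiv.swap_apply_of_ne_of_ne h1 h2]
            exact ⟨σ, hσG, rfl⟩
      have hG'leG : ∀ x y, (orbS G').r x y → (orbS G).r x y := by
        rintro x y ⟨g, hg, rfl⟩
        refine closure_rel (orbS G).iseqv ?_ g hg x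
        rintro s hs z
        simp only [Set.mem_insert_iff, Set.mem_singleton_iff] at hs
        rcases hs with rfl | rfl
        · exact hstepσ' z
        · exact ⟨s, hτG, rfl⟩
      by_cases hsc : ρ.SameCycle a b
      · -- split case: the transposition splits a cycle of ρ
        have haG' : (orbS G').r a b := by
          obtain ⟨i, hi⟩ := hsc
          exact ⟨ρ ^ i, Subgroup.zpow_mem G' hρG' i, hi⟩
        have hstepσ : ∀ x, (orbS G').r x (σ x) := by
          intro x
          by_cases h1 : σ' x = a
          · rw [hσx, h1, Equiv.swap_apply_left]
            exact (orbS G').iseqv.trans ⟨σ', hσ'G', h1⟩ haG'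
          · by_cases h2 : σ' x = b
            · rw [hσx, h2, Equiv.swap_apply_right]
              exact (orbS G').iseqv.trans ⟨σ', hσ'G', h2⟩ ((orbS G').iseqv.symm haG')
            · rw [hσx, Equiv.swap_apply_of_ne_of_ne h1 h2]
              exact ⟨σ', hσ'G', rfl⟩
        have hGleG' : ∀ x y, (orbS G).r x y → (orbS G').r x y := by
          rintro x y ⟨g, hg, rfl⟩
          refine closure_rel (orbS G').iseqv ?_ g hg x
          rintro s hs z
          simp only [Set.mem_insert_iff, Set.mem_singleton_iff] at hs
          rcases hs with rfl | rfl
          · exact hstepσ z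
          · exact ⟨s, hτG', rfl⟩
        have hA : numOrb G' ≤ numOrb G := card_quot_le_of_le hGleG'
        have hY' := numCycles_swap_mul_of_sameCycle hsc
        rw [← hστ] at hY'
        omega
      · -- merge case: the transposition merges two cycles of ρ
        have hYρ := numCycles_swap_mul_of_not hab hsc
        rw [← hστ] at hYρ
        have hsp : ∀ x y, (orbS G).r x y → (orbS G').r x y ∨
            (((orbS G').r x a ∨ (orbS G').r x b) ∧ ((orbS G').r y a ∨ (orbS G').r y b)) := by
          rintro x y ⟨g, hg, rfl⟩
          refine closure_rel (rrEquiv (orbS G') a b) ?_ g hg x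
          rintro s hs z
          simp only [Set.mem_insert_iff, Set.mem_singleton_iff] at hs
          rcases hs with rfl | rfl
          · by_cases h1 : σ' z = a
            · refine Or.inr ⟨Or.inl ⟨σ', hσ'G', h1⟩, ?_⟩
              rw [hσx, h1, Equiv.swap_apply_left]
              exact Or.inr ((orbS G').iseqv.refl b)
            · by_cases h2 : σ' z = b
              · refine Or.inr ⟨Or.inr ⟨σ', hσ'G', h2⟩, ?_⟩
                rw [hσx, h2, Equiv.swap_apply_right]
                exact Or.inl ((orbS G').iseqv.refl a)
              · refine Or.inl ?_
                rw [hσx, Equiv.swap_apply_of_ne_of_ne h1 h2]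
                exact ⟨σ', hσ'G', rfl⟩
          · exact Or.inl ⟨s, hτG', rfl⟩
        have horb : numOrb G' ≤ numOrb G + 1 := card_quot_le_succ hG'leG hsp
        omega

end HypermapAux

/-- A hypermap of genus `g` on `d` darts is a pair `σ, τ ∈ S_d` generating a
transitive subgroup, with `2 - 2g = c(σ) + c(τ) + c(στ) - d`.  Since `g ≥ 0`
and the genus is an integer, for any such transitive pair one has
`c(σ) + c(τ) + c(στ) ≤ d + 2` and `c(σ) + c(τ) + c(στ) ≡ d (mod 2)`. -/
theorem hypermap_genus_bound_and_parity (d : ℕ) (σ τ : Equiv.Perm (Fin d))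
    (htrans : ∀ x y : Fin d,
      ∃ g ∈ Subgroup.closure ({σ, τ} : Set (Equiv.Perm (Fin d))), g x = y) :
    numCycles σ + numCycles τ + numCycles (σ * τ) ≤ d + 2 ∧
      (numCycles σ + numCycles τ + numCycles (σ * τ)) % 2 = d % 2 := by
  constructor
  · have hk := HypermapAux.key σ.support.card σ τ rfl
    have hle1 : HypermapAux.numOrb (Subgroup.closure ({σ, τ} : Set (Equiv.Perm (Fin d)))) ≤ 1 := by
      have hsub : Subsingleton (Quotient
          (HypermapAux.orbS (Subgroup.closure ({σ, τ} : Set (Equiv.Perm (Fin d)))))) := by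
        constructor
        intro q₁ q₂
        obtain ⟨x, rfl⟩ := Quotient.exists_rep q₁
        obtain ⟨y, rfl⟩ := Quotient.exists_rep q₂
        obtain ⟨g, hg, hxy⟩ := htrans x y
        exact Quotient.sound ⟨g, hg, hxy⟩
      exact Finite.card_le_one_iff_subsingleton.mpr hsub
    omega
  · have hs1 : σ.cycleType.sum ≤ d := by
      rw [Equiv.Perm.sum_cycleType]
      simpa using Finset.card_le_univ σ.support
    have hs2 : τ.cycleType.sum ≤ d := by
      rw [Equiv.Perm.sum_cycleType]
      simpa using Finset.card_le_univ τ.support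
    have hs3 : (σ * τ).cycleType.sum ≤ d := by
      rw [Equiv.Perm.sum_cycleType]
      simpa using Finset.card_le_univ (σ * τ).support
    have hsign : (-1 : ℤˣ) ^ (σ.cycleType.sum + σ.cycleType.card) *
        (-1 : ℤˣ) ^ (τ.cycleType.sum + τ.cycleType.card) =
        (-1 : ℤˣ) ^ ((σ * τ).cycleType.sum + (σ * τ).cycleType.card) := by
      rw [← Equiv.Perm.sign_of_cycleType, ← Equiv.Perm.sign_of_cycleType,
        ← Equiv.Perm.sign_of_cycleType, Equiv.Perm.sign_mul]
    have hone : (-1 : ℤˣ) ^ ((σ.cycleType.sum + σ.cycleType.card) +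
        (τ.cycleType.sum + τ.cycleType.card) +
        ((σ * τ).cycleType.sum + (σ * τ).cycleType.card)) = 1 := by
      rw [pow_add, pow_add, hsign]
      exact Int.units_mul_self _
    have heven := (neg_one_pow_eq_one_iff_even (by decide : (-1 : ℤˣ) ≠ 1)).mp hone
    obtain ⟨m, hm⟩ := heven
    simp only [numCycles]
    omega
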